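/- A rotation set for m_3 contains at most two distinct periodic orbits of m_3: if X ⊆ 𝕋 is a rotation set for m_3 and C₁, C₂, C₃ ⊆ X are periodic orbits of m_3, then C₁, C₂, C₃ are not pairwise distinct. -/

import Mathlib

open Set MeasureTheory ENNReal

noncomputable section

instance : Fact ((0:ℝ) < 1) := ⟨one_pos⟩

/-- The circle `ℝ/ℤ`. -/
abbrev Circle1 : Type := AddCircle (1 : ℝ)

/-- The multiplication-by-`d` map `m_d` on the circle. -/
def md (d : ℕ) : Circle1 → Circle1 := fun t => d • t

/-- `G : ℝ → ℝ` (monotone, commuting with `x ↦ x + 1`) is a lift of the circle map `g`. -/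
def IsLift (g : Circle1 → Circle1) (G : CircleDeg1Lift) : Prop :=
  ∀ x : ℝ, g ((x : ℝ) : Circle1) = ((G x : ℝ) : Circle1)

/-- `g` is a monotone degree-one circle map. -/
def IsMonotoneDeg1 (g : Circle1 → Circle1) : Prop :=
  ∃ G : CircleDeg1Lift, IsLift g G

/-- `ρ` is the rotation number of the monotone degree-one circle map `g`:
the residue class mod `ℤ` of the translation number of a lift of `g`. -/
def HasRotationNumber (g : Circle1 → Circle1) (ρ : Circle1) : Prop :=
  ∃ G : CircleDeg1Lift, IsLift g G ∧ ρ = ((G.translationNumber : ℝ) : Circle1)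

/-- `X` is a rotation set for `m_d`. -/
def IsRotationSet (d : ℕ) (X : Set Circle1) : Prop :=
  X.Nonempty ∧ IsCompact X ∧ md d '' X = X ∧
    ∃ g : Circle1 → Circle1, IsMonotoneDeg1 g ∧ ∀ t ∈ X, g t = md d t

/-- `X` is a rotation set for `m_d` with rotation number `ρ`. -/
def IsRotationSetWith (d : ℕ) (X : Set Circle1) (ρ : Circle1) : Prop :=
  X.Nonempty ∧ IsCompact X ∧ md d '' X = X ∧
    ∃ g : Circle1 → Circle1, (∀ t ∈ X, g t = md d t) ∧ HasRotationNumber g ρ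

/-- A gap of `X` is a connected component of the complement of `X`. -/
def IsGap (X : Set Circle1) (I : Set Circle1) : Prop :=
  ∃ t ∈ Xᶜ, I = connectedComponentIn Xᶜ t

/-- `C` is a periodic orbit (cycle) of `m_d`. -/
def IsPeriodicOrbit (d : ℕ) (C : Set Circle1) : Prop :=
  ∃ (t : Circle1) (n : ℕ), 0 < n ∧ (md d)^[n] t = t ∧
    C = Set.range (fun k : Fin n => (md d)^[(k : ℕ)] t)

/-- The number of points of `X` whose representative in `[0,1)` lies in `[0,1/2)`. -/
def s1 (X : Set Circle1) : ℕ :=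
  {t ∈ X | ((AddCircle.equivIco 1 0 t : ℝ) < 1 / 2)}.ncard

namespace AtMostTwoAux

/-- Two reals are equal on the circle iff they differ by an integer. -/
lemma coe_eq_iff (a b : ℝ) : ((a : Circle1) = (b : Circle1)) ↔ ∃ z : ℤ, b - a = z := by
  rw [show ((a : Circle1) = (b : Circle1)) ↔ ((a : ℝ) : AddCircle (1:ℝ)) = b from Iff.rfl]
  rw [QuotientAddGroup.eq_iff_sub_mem, AddSubgroup.mem_zmultiples_iff]
  constructor
  · rintro ⟨z, hz⟩; simp only [zsmul_eq_mul, mul_one] at hz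
    exact ⟨-z, by push_cast; linarith⟩
  · rintro ⟨z, hz⟩; exact ⟨-z, by simp only [zsmul_eq_mul, mul_one]; push_cast; linarith⟩

lemma coe_add_int (a : ℝ) (z : ℤ) : ((a + z : ℝ) : Circle1) = (a : Circle1) := by
  symm; rw [coe_eq_iff]; exact ⟨z, by ring⟩

lemma md_coe (d : ℕ) (x : ℝ) : md d ((x : ℝ) : Circle1) = ((d * x : ℝ) : Circle1) := by
  show d • ((x : ℝ) : Circle1) = _
  rw [show ((d : ℝ) * x) = d • x from (nsmul_eq_mul d x).symm]
  exact (AddMonoidHom.map_nsmul (QuotientAddGroup.mk' _) d x).symm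

/-- If `f` has period `N`, then `f (j + N * z) = f j`. -/
lemma periodic_int {α : Sort*} (f : ℤ → α) (N : ℤ) (h : ∀ i, f (i + N) = f i) (j z : ℤ) :
    f (j + N * z) = f j := by
  induction z using Int.induction_on with
  | zero => simp
  | succ m hm =>
      rw [show j + N * (m + 1) = (j + N * m) + N by ring, h, hm]
  | pred m hm =>
      have h2 := h (j + N * (-(m:ℤ)) - N)
      rw [sub_add_cancel] at h2
      rw [show j + N * (-(m:ℤ) - 1) = j + N * (-(m:ℤ)) - N by ring, ← h2, hm]

lemma iterate_fix_mod {α : Type*} (m : α → α) {t : α} {n : ℕ} (hn : 0 < n)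
    (ht : m^[n] t = t) (k : ℕ) : m^[k] t = m^[k % n] t := by
  conv_lhs => rw [← Nat.mod_add_div k n]
  rw [Function.iterate_add_apply]
  congr 1
  rw [Function.iterate_mul]
  exact Function.iterate_fixed ht _

lemma orbit_eq_range {α : Type*} (m : α → α) (t : α) (n : ℕ) (hn : 0 < n)
    (ht : m^[n] t = t) {s : α} (hs : s ∈ Set.range (fun k : Fin n => m^[(k : ℕ)] t)) :
    Set.range (fun k : Fin n => m^[(k : ℕ)] t) = Set.range (fun k : ℕ => m^[k] s) := by
  obtain ⟨⟨i, hi⟩, rfl⟩ := hs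
  ext a
  simp only [Set.mem_range]
  constructor
  · rintro ⟨⟨j, hj⟩, rfl⟩
    refine ⟨j + (n - i), ?_⟩
    simp only
    rw [← Function.iterate_add_apply]
    rw [show j + (n - i) + i = j + n by omega, Function.iterate_add_apply, ht]
  · rintro ⟨j, rfl⟩
    refine ⟨⟨(j + i) % n, Nat.mod_lt _ hn⟩, ?_⟩
    simp only
    rw [← iterate_fix_mod m hn ht (j + i), Function.iterate_add_apply]

/-- Enumeration of the lifts of a finite nonempty subset of the circle as a strictly
increasing bi-infinite sequence commuting with the translation by one. -/
lemma exists_enum (Y : Set Circle1) (hfin : Y.Finite) (hne : Y.Nonempty) :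
    ∃ (N : ℕ) (x : ℤ → ℝ), N = Y.ncard ∧ 0 < N ∧ StrictMono x ∧
      (∀ i : ℤ, x (i + N) = x i + 1) ∧
      (∀ i : ℤ, ((x i : ℝ) : Circle1) ∈ Y) ∧
      (∀ y : ℝ, ((y : ℝ) : Circle1) ∈ Y → ∃ i : ℤ, x i = y) ∧
      (∀ i j : ℤ, ((x i : ℝ) : Circle1) = ((x j : ℝ) : Circle1) → ∃ z : ℤ, j = i + N * z) := by
  classical
  set rep : Circle1 → ℝ := fun t => ((AddCircle.equivIco 1 0 t : ℝ)) with hrepdef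
  have hrep1 : ∀ t : Circle1, ((rep t : ℝ) : Circle1) = t := fun t =>
    (AddCircle.equivIco (1:ℝ) 0).symm_apply_apply t
  have hrep2 : ∀ t, rep t ∈ Set.Ico (0:ℝ) 1 := by
    intro t
    have := (AddCircle.equivIco (1:ℝ) 0 t).2
    simpa using this
  have hrepinj : Function.Injective rep := by
    intro a b hab
    rw [← hrep1 a, ← hrep1 b, hab]
  have hfract : ∀ y : ℝ, rep ((y : ℝ) : Circle1) = Int.fract y := by
    intro y
    show ((AddCircle.equivIco (1:ℝ) 0 (QuotientAddGroup.mk y) : ℝ)) = _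
    rw [AddCircle.coe_equivIco_mk_apply]
    simp
  set S : Finset ℝ := (hfin.image rep).toFinset with hSdef
  set N : ℕ := S.card with hNdef
  have hmemS : ∀ t ∈ Y, rep t ∈ S := by
    intro t ht
    rw [hSdef, Set.Finite.mem_toFinset]
    exact ⟨t, ht, rfl⟩
  have hSmem : ∀ s ∈ S, ∃ t ∈ Y, rep t = s := by
    intro s hs
    rw [hSdef, Set.Finite.mem_toFinset] at hs
    exact hs
  have hNpos : 0 < N := by
    obtain ⟨t, ht⟩ := hne
    exact Finset.card_pos.mpr ⟨rep t, hmemS t ht⟩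
  have hNne : (N : ℤ) ≠ 0 := by exact_mod_cast hNpos.ne'
  have hNcard : N = Y.ncard := by
    have h1 : (rep '' Y).ncard = Y.ncard := Set.ncard_image_of_injective Y hrepinj
    rw [hNdef, hSdef, ← h1, Set.ncard_eq_toFinset_card _ (hfin.image rep)]
  set ef : Fin N → ℝ := fun m => ((S.orderIsoOfFin hNdef.symm m : ℝ)) with hefdef
  have hefS : ∀ m, ef m ∈ S := fun m => (S.orderIsoOfFin hNdef.symm m).2
  have hefmono : StrictMono ef := by
    intro a b hab
    exact_mod_cast (S.orderIsoOfFin hNdef.symm).strictMono hab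
  have hef01 : ∀ m, ef m ∈ Set.Ico (0:ℝ) 1 := by
    intro m
    obtain ⟨t, ht, hts⟩ := hSmem _ (hefS m)
    rw [← hts]; exact hrep2 t
  have hefY : ∀ m, ((ef m : ℝ) : Circle1) ∈ Y := by
    intro m
    obtain ⟨t, ht, hts⟩ := hSmem _ (hefS m)
    rw [← hts, hrep1]; exact ht
  have hefsurj : ∀ s ∈ S, ∃ m, ef m = s := by
    intro s hs
    obtain ⟨m, hm⟩ := (S.orderIsoOfFin hNdef.symm).surjective ⟨s, hs⟩
    exact ⟨m, by rw [hefdef]; simp only [hm]⟩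
  have hidx : ∀ i : ℤ, (i % (N:ℤ)).toNat < N := by
    intro i
    have h1 : 0 ≤ i % (N:ℤ) := Int.emod_nonneg i hNne
    have h2 : i % (N:ℤ) < N := Int.emod_lt_of_pos i (by exact_mod_cast hNpos)
    omega
  set x : ℤ → ℝ := fun i => ef ⟨(i % (N:ℤ)).toNat, hidx i⟩ + ((i / (N:ℤ) : ℤ) : ℝ) with hxdef
  have hxval : ∀ i : ℤ, x i = ef ⟨(i % (N:ℤ)).toNat, hidx i⟩ + ((i / (N:ℤ) : ℤ) : ℝ) :=
    fun i => rfl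
  have hmodN : ∀ i : ℤ, (i + N) % (N:ℤ) = i % N := by
    intro i
    conv_lhs => rw [show i + (N:ℤ) = i + (N:ℤ) * 1 by ring]
    exact Int.add_mul_emod_self_left i (N:ℤ) 1
  have hdivN : ∀ i : ℤ, (i + N) / (N:ℤ) = i / N + 1 := by
    intro i
    conv_lhs => rw [show i + (N:ℤ) = i + 1 * (N:ℤ) by ring]
    rw [Int.add_mul_ediv_right _ _ hNne]
  have hxN : ∀ i : ℤ, x (i + N) = x i + 1 := by
    intro i
    rw [hxval, hxval]
    have hfin2 : (⟨((i + N) % (N:ℤ)).toNat, hidx _⟩ : Fin N) = ⟨(i % (N:ℤ)).toNat, hidx i⟩ := by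
      apply Fin.ext
      simp [hmodN i]
    rw [hfin2, hdivN i]
    push_cast
    ring
  have hxmono : StrictMono x := by
    intro i j hij
    have hdle : i / (N:ℤ) ≤ j / N := Int.ediv_le_ediv (by exact_mod_cast hNpos) hij.le
    rcases eq_or_lt_of_le hdle with heq | hlt
    · have hi := Int.emod_add_mul_ediv i N
      have hj := Int.emod_add_mul_ediv j N
      have hmul : (N:ℤ) * (i / N) = N * (j / N) := by rw [heq]
      have hm : i % (N:ℤ) < j % N := by linarith
      have hfl : (⟨(i % (N:ℤ)).toNat, hidx i⟩ : Fin N) < ⟨(j % (N:ℤ)).toNat, hidx j⟩ := by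
        have h1 : 0 ≤ i % (N:ℤ) := Int.emod_nonneg i hNne
        rw [Fin.lt_def]
        simp only
        omega
      have := hefmono hfl
      rw [hxval, hxval, heq]
      linarith
    · have h1 := (hef01 ⟨(i % (N:ℤ)).toNat, hidx i⟩).2
      have h2 := (hef01 ⟨(j % (N:ℤ)).toNat, hidx j⟩).1
      have h3 : i / (N:ℤ) + 1 ≤ j / N := hlt
      have h4 : ((i / (N:ℤ) : ℤ) : ℝ) + 1 ≤ ((j / (N:ℤ) : ℤ) : ℝ) := by exact_mod_cast h3
      rw [hxval, hxval]
      linarith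
  have hxY : ∀ i : ℤ, ((x i : ℝ) : Circle1) ∈ Y := by
    intro i
    rw [hxval, AtMostTwoAux.coe_add_int]
    exact hefY _
  have hxsurj : ∀ y : ℝ, ((y : ℝ) : Circle1) ∈ Y → ∃ i : ℤ, x i = y := by
    intro y hy
    have h1 : Int.fract y ∈ S := by
      have := hmemS _ hy
      rwa [hfract] at this
    obtain ⟨m, hm⟩ := hefsurj _ h1
    refine ⟨(m : ℤ) + N * ⌊y⌋, ?_⟩
    have hmod : ((m : ℤ) + N * ⌊y⌋) % (N:ℤ) = m := by
      rw [Int.add_mul_emod_self_left]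
      exact Int.emod_eq_of_lt (by positivity) (by exact_mod_cast m.2)
    have hdiv : ((m : ℤ) + N * ⌊y⌋) / (N:ℤ) = ⌊y⌋ := by
      rw [Int.add_mul_ediv_left _ _ hNne]
      rw [Int.ediv_eq_zero_of_lt (by positivity) (by exact_mod_cast m.2)]
      ring
    rw [hxval]
    have hfin2 : (⟨(((m : ℤ) + N * ⌊y⌋) % (N:ℤ)).toNat, hidx _⟩ : Fin N) = m := by
      apply Fin.ext
      simp [hmod]
    rw [hfin2, hdiv, hm]
    exact Int.fract_add_floor y
  have hxmod : ∀ i j : ℤ, ((x i : ℝ) : Circle1) = ((x j : ℝ) : Circle1) →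
      ∃ z : ℤ, j = i + N * z := by
    intro i j hcoe
    obtain ⟨z, hz⟩ := (AtMostTwoAux.coe_eq_iff _ _).mp hcoe
    have hw : ef ⟨(j % (N:ℤ)).toNat, hidx j⟩ - ef ⟨(i % (N:ℤ)).toNat, hidx i⟩ =
        ((z - (j / (N:ℤ) - i / N) : ℤ) : ℝ) := by
      rw [hxval, hxval] at hz
      push_cast
      linarith
    have h1 := (hef01 ⟨(i % (N:ℤ)).toNat, hidx i⟩)
    have h2 := (hef01 ⟨(j % (N:ℤ)).toNat, hidx j⟩)
    have hb1 : (-1 : ℝ) < ((z - (j / (N:ℤ) - i / N) : ℤ) : ℝ) := by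
      rw [← hw]; obtain ⟨a1, a2⟩ := h1; obtain ⟨b1, b2⟩ := h2; linarith
    have hb2 : ((z - (j / (N:ℤ) - i / N) : ℤ) : ℝ) < 1 := by
      rw [← hw]; obtain ⟨a1, a2⟩ := h1; obtain ⟨b1, b2⟩ := h2; linarith
    have hz0 : z - (j / (N:ℤ) - i / N) = 0 := by
      have c1 : (-1 : ℤ) < z - (j / (N:ℤ) - i / N) := by exact_mod_cast hb1
      have c2 : z - (j / (N:ℤ) - i / N) < 1 := by exact_mod_cast hb2
      omega
    have hefeq : ef ⟨(j % (N:ℤ)).toNat, hidx j⟩ = ef ⟨(i % (N:ℤ)).toNat, hidx i⟩ := by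
      have := hw
      rw [hz0] at this
      push_cast at this
      linarith
    have hfineq := hefmono.injective hefeq
    have hmodeq : j % (N:ℤ) = i % N := by
      have h3 : 0 ≤ j % (N:ℤ) := Int.emod_nonneg j hNne
      have h4 : 0 ≤ i % (N:ℤ) := Int.emod_nonneg i hNne
      have h5 : ((j % (N:ℤ)).toNat : ℤ) = ((i % (N:ℤ)).toNat : ℤ) := by
        exact_mod_cast congrArg (fun m : Fin N => (m : ℕ)) hfineq
      omega
    have hdvd : (N:ℤ) ∣ j - i := by
      rw [Int.dvd_iff_emod_eq_zero, ← Int.emod_emod_of_dvd]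
      · rw [Int.sub_emod, hmodeq, sub_self]
        simp
      · exact dvd_refl _
    obtain ⟨z', hz'⟩ := hdvd
    exact ⟨z', by linarith⟩
  exact ⟨N, x, hNcard, hNpos, hxmono, hxN, hxY, hxsurj, hxmod⟩

end AtMostTwoAux


/-- A rotation set for `m_3` contains at most two distinct periodic
orbits of `m_3`. -/
theorem at_most_two_cycles_in_m3_rotation_set
    (X : Set Circle1) (hX : IsRotationSet 3 X)
    (C₁ C₂ C₃ : Set Circle1)
    (h₁ : IsPeriodicOrbit 3 C₁) (h₂ : IsPeriodicOrbit 3 C₂) (h₃ : IsPeriodicOrbit 3 C₃)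
    (hs₁ : C₁ ⊆ X) (hs₂ : C₂ ⊆ X) (hs₃ : C₃ ⊆ X) :
    ¬(C₁ ≠ C₂ ∧ C₁ ≠ C₃ ∧ C₂ ≠ C₃) := by
  rintro ⟨h12, h13, h23⟩
  classical
  obtain ⟨-, -, -, g, ⟨G, hlift⟩, hagree⟩ := hX
  obtain ⟨t₁, n₁, hn₁, ht₁, hC₁⟩ := h₁
  obtain ⟨t₂, n₂, hn₂, ht₂, hC₂⟩ := h₂
  obtain ⟨t₃, n₃, hn₃, ht₃, hC₃⟩ := h₃
  set Y : Set Circle1 := C₁ ∪ C₂ ∪ C₃ with hYdef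
  -- distinct orbits are disjoint
  have horb : ∀ (C : Set Circle1) (t : Circle1) (n : ℕ), 0 < n → (md 3)^[n] t = t →
      C = Set.range (fun k : Fin n => (md 3)^[(k : ℕ)] t) → ∀ s ∈ C,
      C = Set.range (fun k : ℕ => (md 3)^[k] s) := by
    intro C t n hn ht hC s hs
    rw [hC] at hs ⊢
    exact AtMostTwoAux.orbit_eq_range _ t n hn ht hs
  have hdisj12 : ∀ a, a ∈ C₁ → a ∈ C₂ → False := fun a ha1 ha2 =>
    h12 ((horb C₁ t₁ n₁ hn₁ ht₁ hC₁ a ha1).trans (horb C₂ t₂ n₂ hn₂ ht₂ hC₂ a ha2).symm)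
  have hdisj13 : ∀ a, a ∈ C₁ → a ∈ C₃ → False := fun a ha1 ha2 =>
    h13 ((horb C₁ t₁ n₁ hn₁ ht₁ hC₁ a ha1).trans (horb C₃ t₃ n₃ hn₃ ht₃ hC₃ a ha2).symm)
  have hdisj23 : ∀ a, a ∈ C₂ → a ∈ C₃ → False := fun a ha1 ha2 =>
    h23 ((horb C₂ t₂ n₂ hn₂ ht₂ hC₂ a ha1).trans (horb C₃ t₃ n₃ hn₃ ht₃ hC₃ a ha2).symm)
  -- invariance of orbits
  have hinv : ∀ (C : Set Circle1) (t : Circle1) (n : ℕ), 0 < n → (md 3)^[n] t = t →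
      C = Set.range (fun k : Fin n => (md 3)^[(k : ℕ)] t) → ∀ s ∈ C, md 3 s ∈ C := by
    intro C t n hn ht hC s hs
    rw [hC] at hs ⊢
    obtain ⟨⟨j, hj⟩, rfl⟩ := hs
    refine ⟨⟨(j + 1) % n, Nat.mod_lt _ hn⟩, ?_⟩
    simp only
    rw [← AtMostTwoAux.iterate_fix_mod (md 3) hn ht (j + 1), Function.iterate_succ_apply']
  have hinv1 := hinv C₁ t₁ n₁ hn₁ ht₁ hC₁
  have hinv2 := hinv C₂ t₂ n₂ hn₂ ht₂ hC₂
  have hinv3 := hinv C₃ t₃ n₃ hn₃ ht₃ hC₃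
  have hYinv : ∀ s ∈ Y, md 3 s ∈ Y := by
    rintro s ((hs | hs) | hs)
    · exact Or.inl (Or.inl (hinv1 s hs))
    · exact Or.inl (Or.inr (hinv2 s hs))
    · exact Or.inr (hinv3 s hs)
  have hYX : Y ⊆ X := by
    rintro s ((hs | hs) | hs)
    · exact hs₁ hs
    · exact hs₂ hs
    · exact hs₃ hs
  -- every point of an orbit is periodic with the orbit's period
  have hfixC : ∀ (C : Set Circle1) (t : Circle1) (n : ℕ), 0 < n → (md 3)^[n] t = t →
      C = Set.range (fun k : Fin n => (md 3)^[(k : ℕ)] t) → ∀ s ∈ C, (md 3)^[n] s = s := by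
    intro C t n hn ht hC s hs
    rw [hC] at hs
    obtain ⟨⟨j, hj⟩, rfl⟩ := hs
    simp only
    rw [← Function.iterate_add_apply, add_comm, Function.iterate_add_apply, ht]
  set L : ℕ := n₁ * n₂ * n₃ with hLdef
  have hLY : ∀ s ∈ Y, (md 3)^[L] s = s := by
    rintro s ((hs | hs) | hs)
    · rw [show L = n₁ * (n₂ * n₃) by rw [hLdef]; ring, Function.iterate_mul]
      exact Function.iterate_fixed (hfixC C₁ t₁ n₁ hn₁ ht₁ hC₁ s hs) _
    · rw [show L = n₂ * (n₁ * n₃) by rw [hLdef]; ring, Function.iterate_mul]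
      exact Function.iterate_fixed (hfixC C₂ t₂ n₂ hn₂ ht₂ hC₂ s hs) _
    · rw [show L = n₃ * (n₁ * n₂) by rw [hLdef]; ring, Function.iterate_mul]
      exact Function.iterate_fixed (hfixC C₃ t₃ n₃ hn₃ ht₃ hC₃ s hs) _
  have hLpos : 0 < L := by rw [hLdef]; positivity
  have hinjY : ∀ a ∈ Y, ∀ b ∈ Y, md 3 a = md 3 b → a = b := by
    intro a ha b hb hab
    have h1 : (md 3)^[L] a = a := hLY a ha
    have h2 : (md 3)^[L] b = b := hLY b hb
    rw [← h1, ← h2, show L = (L - 1) + 1 by omega, Function.iterate_succ_apply,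
      Function.iterate_succ_apply, hab]
  -- Y is finite and nonempty
  have hfin : Y.Finite := by
    rw [hYdef, hC₁, hC₂, hC₃]
    exact ((Set.finite_range _).union (Set.finite_range _)).union (Set.finite_range _)
  have ht₁C : t₁ ∈ C₁ := by rw [hC₁]; exact ⟨⟨0, hn₁⟩, by simp⟩
  have ht₂C : t₂ ∈ C₂ := by rw [hC₂]; exact ⟨⟨0, hn₂⟩, by simp⟩
  have hne : Y.Nonempty := ⟨t₁, Or.inl (Or.inl ht₁C)⟩
  obtain ⟨N, x, hNcard, hNpos, hxmono, hxN, hxY, hxsurj, hxmod⟩ :=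
    AtMostTwoAux.exists_enum Y hfin hne
  have hN2 : 1 < N := by
    rw [hNcard]
    rw [Set.one_lt_ncard_iff hfin]
    exact ⟨t₁, t₂, Or.inl (Or.inl ht₁C), Or.inl (Or.inr ht₂C),
      fun h => hdisj12 t₁ ht₁C (h ▸ ht₂C)⟩
  -- the lift permutes the sequence x
  have hσex : ∀ i : ℤ, ∃ j : ℤ, x j = G (x i) := by
    intro i
    apply hxsurj
    have h1 : ((G (x i) : ℝ) : Circle1) = md 3 ((x i : ℝ) : Circle1) := by
      rw [← hlift (x i), hagree _ (hYX (hxY i))]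
    rw [h1]
    exact hYinv _ (hxY i)
  choose σ hσ using hσex
  have hPtσ : ∀ i : ℤ, ((x (σ i) : ℝ) : Circle1) = md 3 ((x i : ℝ) : Circle1) := by
    intro i
    rw [hσ i, ← hlift (x i), hagree _ (hYX (hxY i))]
  have hσmono : Monotone σ := by
    intro i j hij
    by_contra hc
    push_neg at hc
    have h1 := hxmono hc
    rw [hσ i, hσ j] at h1
    exact absurd h1 (not_lt.mpr (G.monotone (hxmono.monotone hij)))
  have hσN : ∀ i, σ (i + N) = σ i + N := by
    intro i
    apply hxmono.injective
    rw [hσ (i + N), hxN i, G.map_add_one, ← hσ i, ← hxN (σ i)]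
  have hσinj : Function.Injective σ := by
    intro i j hij
    have hPt : ((x i : ℝ) : Circle1) = ((x j : ℝ) : Circle1) := by
      apply hinjY _ (hxY i) _ (hxY j)
      rw [← hPtσ i, ← hPtσ j, hij]
    obtain ⟨z, hz⟩ := hxmod i j hPt
    have hper : ∀ a : ℤ, (fun b => σ b - b) (a + (N : ℤ)) = (fun b => σ b - b) a := by
      intro a
      simp only
      rw [hσN a]
      ring
    have h2 := AtMostTwoAux.periodic_int (fun b => σ b - b) N hper i z
    rw [← hz] at h2
    omega
  have hσstrict : StrictMono σ := hσmono.strictMono_of_injective hσinj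
  have hmany : ∀ (j : ℤ) (m : ℕ), σ j + m ≤ σ (j + m) := by
    intro j m
    induction m with
    | zero => simp
    | succ m ih =>
        have h1 : σ (j + m) + 1 ≤ σ (j + m + 1) := hσstrict (lt_add_one _)
        calc σ j + ((m + 1 : ℕ) : ℤ) = (σ j + m) + 1 := by push_cast; ring
          _ ≤ σ (j + m) + 1 := by omega
          _ ≤ σ (j + m + 1) := h1
          _ = σ (j + ((m + 1 : ℕ) : ℤ)) := by
              rw [show j + (m : ℤ) + 1 = j + (((m + 1) : ℕ) : ℤ) by push_cast; ring]
  have hstep : ∀ i, σ (i + 1) = σ i + 1 := by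
    intro i
    have hlow : σ i + 1 ≤ σ (i + 1) := hσstrict (lt_add_one i)
    have hupp := hmany (i + 1) (N - 1)
    have hcast : ((N - 1 : ℕ) : ℤ) = (N : ℤ) - 1 := by
      have : 1 ≤ N := hNpos
      push_cast [Nat.cast_sub this]
      ring
    rw [hcast, show i + 1 + ((N : ℤ) - 1) = i + N by ring, hσN] at hupp
    omega
  set k : ℤ := σ 0 with hkdef
  have hσeq : ∀ i, σ i = i + k := by
    intro i
    induction i using Int.induction_on with
    | zero => simp [hkdef]
    | succ m hm => rw [hstep m, hm]; ring
    | pred m hm =>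
        have h1 := hstep (-(m : ℤ) - 1)
        rw [sub_add_cancel] at h1
        omega
  -- the integer jumps
  have hczex : ∀ i : ℤ, ∃ z : ℤ, 3 * x i - x (i + k) = z := by
    intro i
    apply (AtMostTwoAux.coe_eq_iff _ _).mp
    rw [← hσeq i, hPtσ i, AtMostTwoAux.md_coe]
    norm_num
  choose cz hcz using hczex
  have hnzval : ∀ i : ℤ, ((cz (i + 1) - cz i : ℤ) : ℝ)
      = 3 * (x (i + 1) - x i) - (x (i + k + 1) - x (i + k)) := by
    intro i
    push_cast
    rw [← hcz (i + 1), ← hcz i, show i + 1 + k = i + k + 1 by ring]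
    ring
  have hl0 : ∀ i : ℤ, 0 < x (i + 1) - x i := fun i => sub_pos.mpr (hxmono (lt_add_one i))
  have hl1 : ∀ i : ℤ, x (i + 1) - x i < 1 := by
    intro i
    have h1 : x (i + 1) < x (i + N) := hxmono (by exact_mod_cast (by omega : i + 1 < i + (N : ℤ)))
    rw [hxN] at h1
    linarith
  have hnz0 : ∀ i : ℤ, 0 ≤ cz (i + 1) - cz i := by
    intro i
    have h1 : (-1 : ℝ) < ((cz (i + 1) - cz i : ℤ) : ℝ) := by
      rw [hnzval i]
      have := hl0 i
      have := hl1 (i + k)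
      linarith
    have h2 : (-1 : ℤ) < cz (i + 1) - cz i := by exact_mod_cast h1
    omega
  set f : ℕ → ℤ := fun i => cz ((i : ℤ) + 1) - cz (i : ℤ) with hfdef
  have totN : ∑ i ∈ Finset.range N, f i = 2 := by
    have htel := Finset.sum_range_sub (fun m : ℕ => cz (m : ℤ)) N
    have hsummand : ∀ i : ℕ, f i = cz ((i + 1 : ℕ) : ℤ) - cz (i : ℤ) := by
      intro i
      rw [hfdef]
      push_cast
      ring_nf
    rw [Finset.sum_congr rfl (fun i _ => hsummand i), htel]
    have h2 : ((cz (N : ℤ) : ℤ) : ℝ) = ((cz 0 : ℤ) : ℝ) + 2 := by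
      rw [← hcz (N : ℤ), ← hcz 0]
      have e1 : x (N : ℤ) = x 0 + 1 := by
        have := hxN 0
        rwa [zero_add] at this
      have e2 : x ((N : ℤ) + k) = x k + 1 := by
        have := hxN k
        rwa [show k + (N : ℤ) = (N : ℤ) + k by ring] at this
      rw [e1, e2, zero_add]
      ring
    have h3 : cz (N : ℤ) = cz 0 + 2 := by exact_mod_cast h2
    rw [show ((N : ℕ) : ℤ) = (N : ℤ) from rfl, h3]
    ring
  -- the contradiction machine for a cycle whose jumps all vanish
  have grow : ∀ C : Set Circle1, C.Nonempty → (∀ s ∈ C, md 3 s ∈ C) → C ⊆ Y →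
      (∀ i : ℤ, 0 ≤ i → i < N → ((x i : ℝ) : Circle1) ∈ C → cz (i + 1) - cz i = 0) →
      False := by
    intro C hCne hCinv hCY hCzero
    have hPtper : ∀ i : ℤ, ((x (i + N) : ℝ) : Circle1) = ((x i : ℝ) : Circle1) := by
      intro i
      rw [hxN i, show x i + 1 = x i + ((1 : ℤ) : ℝ) by norm_num, AtMostTwoAux.coe_add_int]
    have hlper : ∀ i : ℤ, x (i + N + 1) - x (i + N) = x (i + 1) - x i := by
      intro i
      have h1 := hxN (i + 1)
      rw [show i + 1 + (N : ℤ) = i + N + 1 by ring] at h1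
      rw [h1, hxN i]
      ring
    have hnzper : ∀ i : ℤ, cz (i + N + 1) - cz (i + N) = cz (i + 1) - cz i := by
      intro i
      have h1 := hnzval (i + N)
      have h2 := hnzval i
      rw [hlper i, show i + (N : ℤ) + k = (i + k) + N by ring, hlper (i + k)] at h1
      exact_mod_cast h1.trans h2.symm
    have hPtmulper : ∀ i z : ℤ, ((x (i + N * z) : ℝ) : Circle1) = ((x i : ℝ) : Circle1) :=
      fun i z => AtMostTwoAux.periodic_int (fun j => ((x j : ℝ) : Circle1)) N hPtper i z
    have hlmulper : ∀ i z : ℤ, x (i + N * z + 1) - x (i + N * z) = x (i + 1) - x i :=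
      fun i z => AtMostTwoAux.periodic_int (fun j => x (j + 1) - x j) N hlper i z
    have hnzmulper : ∀ i z : ℤ, cz (i + N * z + 1) - cz (i + N * z) = cz (i + 1) - cz i :=
      fun i z => AtMostTwoAux.periodic_int (fun j => cz (j + 1) - cz j) N hnzper i z
    have hzero' : ∀ i : ℤ, ((x i : ℝ) : Circle1) ∈ C → cz (i + 1) - cz i = 0 := by
      intro i hi
      have hNne : (N : ℤ) ≠ 0 := by exact_mod_cast hNpos.ne'
      have hr0 : 0 ≤ i % (N : ℤ) := Int.emod_nonneg i hNne
      have hrN : i % (N : ℤ) < N := Int.emod_lt_of_pos i (by exact_mod_cast hNpos)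
      have hdecomp : i = i % (N : ℤ) + N * (i / N) := by
        have := Int.emod_add_mul_ediv i N
        linarith
      have h1 : ((x (i % (N : ℤ)) : ℝ) : Circle1) ∈ C := by
        have h2 := hPtmulper (i % (N : ℤ)) (i / N)
        rw [← hdecomp] at h2
        rwa [h2] at hi
      have h2 := hCzero _ hr0 hrN h1
      have h3 := hnzmulper (i % (N : ℤ)) (i / N)
      rw [← hdecomp] at h3
      exact h3.trans h2
    obtain ⟨t, ht⟩ := hCne
    obtain ⟨y, hy⟩ : ∃ y : ℝ, ((y : ℝ) : Circle1) = t :=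
      ⟨(AddCircle.equivIco 1 0 t : ℝ), (AddCircle.equivIco (1 : ℝ) 0).symm_apply_apply t⟩
    obtain ⟨i₀, hxi₀⟩ := hxsurj y (by rw [hy]; exact hCY ht)
    have hi₀C : ((x i₀ : ℝ) : Circle1) ∈ C := by rw [hxi₀, hy]; exact ht
    have hPtk : ∀ i : ℤ, ((x (i + k) : ℝ) : Circle1) = md 3 ((x i : ℝ) : Circle1) := by
      intro i
      rw [← hσeq i]
      exact hPtσ i
    have key : ∀ m : ℕ, (((x (i₀ + m * k) : ℝ) : Circle1) ∈ C) ∧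
        x (i₀ + m * k + 1) - x (i₀ + m * k) = 3 ^ m * (x (i₀ + 1) - x i₀) := by
      intro m
      induction m with
      | zero =>
          constructor
          · simpa using hi₀C
          · norm_num
      | succ m ih =>
          obtain ⟨hm1, hm2⟩ := ih
          have hz := hzero' _ hm1
          have hval := hnzval (i₀ + m * k)
          rw [hz] at hval
          have hidx2 : i₀ + ((m + 1 : ℕ) : ℤ) * k = (i₀ + m * k) + k := by push_cast; ring
          constructor
          · rw [hidx2, hPtk]
            exact hCinv _ hm1
          · rw [hidx2]
            have h5 : x ((i₀ + m * k) + k + 1) - x ((i₀ + m * k) + k)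
                = 3 * (x (i₀ + m * k + 1) - x (i₀ + m * k)) := by
              push_cast at hval
              linarith
            rw [h5, hm2]
            ring
    obtain ⟨-, hkey⟩ := key N
    have hper2 := hlmulper i₀ k
    rw [hkey] at hper2
    have h3N : (1 : ℝ) < 3 ^ N := one_lt_pow₀ (by norm_num) hNpos.ne'
    have h4 := hl0 i₀
    nlinarith
  -- split the jump sum over the three cycles
  set T₁ := (Finset.range N).filter (fun i : ℕ => ((x (i : ℤ) : ℝ) : Circle1) ∈ C₁) with hT₁
  set T₂ := (Finset.range N).filter (fun i : ℕ => ((x (i : ℤ) : ℝ) : Circle1) ∈ C₂) with hT₂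
  set T₃ := (Finset.range N).filter (fun i : ℕ => ((x (i : ℤ) : ℝ) : Circle1) ∈ C₃) with hT₃
  have hcover : T₁ ∪ T₂ ∪ T₃ = Finset.range N := by
    apply Finset.Subset.antisymm
    · intro i hi
      simp only [hT₁, hT₂, hT₃, Finset.mem_union, Finset.mem_filter] at hi
      rcases hi with (⟨h, -⟩ | ⟨h, -⟩) | ⟨h, -⟩ <;> exact h
    · intro i hi
      have hYi := hxY (i : ℤ)
      rw [hYdef] at hYi
      simp only [hT₁, hT₂, hT₃, Finset.mem_union, Finset.mem_filter]
      rcases hYi with (h | h) | h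
      · exact Or.inl (Or.inl ⟨hi, h⟩)
      · exact Or.inl (Or.inr ⟨hi, h⟩)
      · exact Or.inr ⟨hi, h⟩
  have hdT12 : Disjoint T₁ T₂ := by
    rw [Finset.disjoint_left]
    intro a ha hb
    rw [hT₁, Finset.mem_filter] at ha
    rw [hT₂, Finset.mem_filter] at hb
    exact hdisj12 _ ha.2 hb.2
  have hdT3 : Disjoint (T₁ ∪ T₂) T₃ := by
    rw [Finset.disjoint_left]
    intro a ha hb
    rw [hT₃, Finset.mem_filter] at hb
    rcases Finset.mem_union.mp ha with h | h
    · rw [hT₁, Finset.mem_filter] at h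
      exact hdisj13 _ h.2 hb.2
    · rw [hT₂, Finset.mem_filter] at h
      exact hdisj23 _ h.2 hb.2
  have hsum3 : ∑ i ∈ T₁, f i + ∑ i ∈ T₂, f i + ∑ i ∈ T₃, f i = 2 := by
    rw [← Finset.sum_union hdT12, ← Finset.sum_union hdT3, hcover]
    exact totN
  have hnnf : ∀ i : ℕ, 0 ≤ f i := fun i => hnz0 (i : ℤ)
  have hnn : ∀ T : Finset ℕ, 0 ≤ ∑ i ∈ T, f i :=
    fun T => Finset.sum_nonneg fun i _ => hnnf i
  have hone : ∑ i ∈ T₁, f i = 0 ∨ ∑ i ∈ T₂, f i = 0 ∨ ∑ i ∈ T₃, f i = 0 := by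
    have a1 := hnn T₁
    have a2 := hnn T₂
    have a3 := hnn T₃
    omega
  have hmk : ∀ (C : Set Circle1) (T : Finset ℕ),
      T = (Finset.range N).filter (fun i : ℕ => ((x (i : ℤ) : ℝ) : Circle1) ∈ C) →
      (∑ i ∈ T, f i = 0) →
      ∀ i : ℤ, 0 ≤ i → i < N → ((x i : ℝ) : Circle1) ∈ C → cz (i + 1) - cz i = 0 := by
    intro C T hT hsum0 i h0 hiN hiC
    have hall := (Finset.sum_eq_zero_iff_of_nonneg fun j _ => hnnf j).mp hsum0
    have hmem : i.toNat ∈ T := by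
      rw [hT, Finset.mem_filter, Finset.mem_range]
      refine ⟨by omega, ?_⟩
      rw [Int.toNat_of_nonneg h0]
      exact hiC
    have h5 := hall _ hmem
    rw [hfdef] at h5
    simp only at h5
    rwa [Int.toNat_of_nonneg h0] at h5
  have ht₃C : t₃ ∈ C₃ := by rw [hC₃]; exact ⟨⟨0, hn₃⟩, by simp⟩
  rcases hone with h | h | h
  · exact grow C₁ ⟨t₁, ht₁C⟩ hinv1 (fun a ha => Or.inl (Or.inl ha)) (hmk C₁ T₁ hT₁ h)
  · exact grow C₂ ⟨t₂, ht₂C⟩ hinv2 (fun a ha => Or.inl (Or.inr ha)) (hmk C₂ T₂ hT₂ h)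
  · exact grow C₃ ⟨t₃, ht₃C⟩ hinv3 (fun a ha => Or.inr ha) (hmk C₃ T₃ hT₃ h)
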